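/- For fillings θ₁, θ₂ ∈ (0,1) and integer n ≥ 1, every complex solution μ of the cubic λ³ = ((1-θ₁)ⁿ λ + θ₁ⁿ)((1-θ₂)ⁿ λ + θ₂ⁿ) other than the unique positive real root λₙ satisfies |μ| < λₙ, i.e., the positive real root is the strictly dominant root. -/

import Mathlib

/-- Every complex root of the cubic other than the unique positive real root λₙ
has modulus strictly smaller than λₙ. -/
theorem stmt1 (θ₁ θ₂ : ℝ) (hθ₁ : θ₁ ∈ Set.Ioo (0:ℝ) 1) (hθ₂ : θ₂ ∈ Set.Ioo (0:ℝ) 1)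
    (n : ℕ) (hn : 1 ≤ n)
    (l : ℝ) (hlpos : 0 < l)
    (hl : l ^ 3 = ((1 - θ₁) ^ n * l + θ₁ ^ n) * ((1 - θ₂) ^ n * l + θ₂ ^ n))
    (μ : ℂ)
    (hμ : μ ^ 3 = ((1 - (θ₁:ℂ)) ^ n * μ + (θ₁:ℂ) ^ n) * ((1 - (θ₂:ℂ)) ^ n * μ + (θ₂:ℂ) ^ n))
    (hne : μ ≠ (l : ℂ)) :
    ‖μ‖ < l := by
  obtain ⟨h1, h2⟩ := hθ₁
  obtain ⟨h3, h4⟩ := hθ₂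
  set b := (1 - θ₁) ^ n with hb
  set c := θ₁ ^ n with hc
  set d := (1 - θ₂) ^ n with hd
  set e := θ₂ ^ n with he
  have hbp : 0 < b := pow_pos (by linarith) n
  have hcp : 0 < c := pow_pos h1 n
  have hdp : 0 < d := pow_pos (by linarith) n
  have hep : 0 < e := pow_pos h3 n
  set A := b * d with hA
  set B := b * e + c * d with hB
  set C := c * e with hC
  have hAp : 0 < A := mul_pos hbp hdp
  have hBp : 0 < B := add_pos (mul_pos hbp hep) (mul_pos hcp hdp)
  have hCp : 0 < C := mul_pos hcp hep
  have hlR : l ^ 3 = A * l ^ 2 + B * l + C := by rw [hl, hA, hB, hC, hb, hc, hd, he]; ring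
  have hμC : μ ^ 3 = (A:ℝ) * μ ^ 2 + (B:ℝ) * μ + (C:ℝ) := by
    rw [hμ]; push_cast [hA, hB, hC, hb, hc, hd, he]; ring
  set t := ‖μ‖ with ht
  have htnn : 0 ≤ t := norm_nonneg μ
  have habs1 : ‖((A:ℝ) * μ ^ 2 : ℂ)‖ = A * t ^ 2 := by
    simp [map_mul, map_pow, Complex.norm_real, abs_of_pos hAp, ← ht]
  have habsBC : ‖((B:ℝ) * μ + (C:ℝ) : ℂ)‖ ≤ B * t + C := by
    refine (norm_add_le _ _).trans ?_
    simp [map_mul, Complex.norm_real, abs_of_pos hBp, abs_of_pos hCp, ← ht]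
  have hsplit : t ^ 3 ≤ A * t ^ 2 + ‖((B:ℝ) * μ + (C:ℝ) : ℂ)‖ := by
    have h0 : t ^ 3 = ‖μ ^ 3‖ := by rw [norm_pow]
    rw [h0, hμC, add_assoc]
    calc ‖((A:ℝ) * μ ^ 2 + ((B:ℝ) * μ + (C:ℝ)) : ℂ)‖
        ≤ ‖((A:ℝ) * μ ^ 2 : ℂ)‖ + ‖((B:ℝ) * μ + (C:ℝ) : ℂ)‖ :=
          norm_add_le _ _
      _ = A * t ^ 2 + ‖((B:ℝ) * μ + (C:ℝ) : ℂ)‖ := by rw [habs1]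
  have key : t ^ 3 ≤ A * t ^ 2 + B * t + C := by linarith [hsplit, habsBC]
  have hle : t ≤ l := by
    by_contra hcon
    push_neg at hcon
    have htpos : 0 < t := hlpos.trans hcon
    have hint1 : 0 < A * l ^ 2 * t ^ 2 * (t - l) := by
      have : 0 < t - l := by linarith
      positivity
    have hint2 : 0 < B * l * t * (t ^ 2 - l ^ 2) := by
      have h2' : 0 < t ^ 2 - l ^ 2 := by
        nlinarith [mul_pos (sub_pos.mpr hcon) (show (0:ℝ) < t + l by positivity)]
      positivity
    have hint3 : 0 < C * (t ^ 3 - l ^ 3) := by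
      have h3' : 0 < t ^ 3 - l ^ 3 := by
        nlinarith [mul_pos (sub_pos.mpr hcon)
          (show (0:ℝ) < t ^ 2 + t * l + l ^ 2 by positivity)]
      positivity
    have expand : t ^ 3 * l ^ 3 - (A * t ^ 2 + B * t + C) * l ^ 3 =
        A * l ^ 2 * t ^ 2 * (t - l) + B * l * t * (t ^ 2 - l ^ 2) + C * (t ^ 3 - l ^ 3) := by
      linear_combination t ^ 3 * hlR
    have hcontr : (A * t ^ 2 + B * t + C) * l ^ 3 < t ^ 3 * l ^ 3 := by
      linarith [hint1, hint2, hint3, expand]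
    have hge : t ^ 3 * l ^ 3 ≤ (A * t ^ 2 + B * t + C) * l ^ 3 :=
      mul_le_mul_of_nonneg_right key (by positivity)
    linarith
  rcases hle.lt_or_eq with hlt | heq
  · exact hlt
  · -- t = l : equality case, show μ must be real positive = l, contradiction
    exfalso
    have hstep1 : B * l + C ≤ ‖((B:ℝ) * μ + (C:ℝ) : ℂ)‖ := by
      have := hsplit
      rw [heq] at this
      linarith [hlR]
    have hstep2 : ‖((B:ℝ) * μ + (C:ℝ) : ℂ)‖ ≤ B * l + C := by
      rw [← heq]; exact habsBC
    have habs2 : ‖((B:ℝ) * μ + (C:ℝ) : ℂ)‖ = B * l + C := le_antisymm hstep2 hstep1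
    have h5 : (B * μ.re + C) ^ 2 + (B * μ.im) ^ 2 = (B * l + C) ^ 2 := by
      have h := congrArg (· ^ 2) habs2
      simp only [Complex.sq_norm, Complex.normSq_apply, Complex.add_re, Complex.add_im,
        Complex.mul_re, Complex.mul_im, Complex.ofReal_re, Complex.ofReal_im] at h
      linear_combination h
    have hsq : μ.re ^ 2 + μ.im ^ 2 = l ^ 2 := by
      have h : Complex.normSq μ = l ^ 2 := by rw [← Complex.sq_norm, ← ht, heq]
      rw [Complex.normSq_apply] at h
      linear_combination h
    have h6 : B * C * μ.re = B * C * l := by linear_combination h5 / 2 - B ^ 2 / 2 * hsq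
    have hre : μ.re = l := mul_left_cancel₀ (ne_of_gt (mul_pos hBp hCp)) h6
    have him : μ.im = 0 := by
      have h7 : μ.im ^ 2 = 0 := by rw [hre] at hsq; linarith
      exact pow_eq_zero_iff (by norm_num) |>.mp h7
    exact hne (Complex.ext (by simp [hre]) (by simp [him]))
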